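/- arXiv:2303.12176 — 2 statements merged into one kernel-verified Lean document; each statement's English description precedes it below -/
import Mathlib

section
/- Let 𝒜 be a finite category (finitely many objects and finitely many morphisms), let Z be its zeta matrix, the square matrix indexed by the objects of 𝒜 with Z(a,b) = |Hom(a,b)| viewed in ℂ, and let X satisfy the four Penrose equations for Z. If Z admits both a weighting (a vector k with Z·k = 1) and a coweighting (a vector k' with k'ᵀ·Z = 1ᵀ), then the magnitude of 𝒜 equals the sum of all entries of X: χ(𝒜) = ∑ₐ∑_b X(a,b). -/
open Matrix BigOperators CategoryTheory

/-- Let `𝒜` be a finite category with zeta matrix `Z` (given by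
`Z a b = |Hom(a,b)|` viewed in `ℂ`), and let `X` satisfy the four Penrose
equations for `Z`. If `𝒜` admits a weighting `k` and a coweighting `k'`, then
the magnitude of `𝒜` (the sum of the entries of the weighting) equals the sum
of all the entries of `X`. -/
theorem magnitude_finCat_eq_sum_pseudoinverse {A : Type*} [Category A]
    [Fintype A] [∀ a b : A, Fintype (a ⟶ b)]
    (Z : Matrix A A ℂ) (hZ : ∀ a b : A, Z a b = (Fintype.card (a ⟶ b) : ℂ))
    (X : Matrix A A ℂ)
    (h1 : Z * X * Z = Z) (h2 : X * Z * X = X)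
    (h3 : (Z * X)ᴴ = Z * X) (h4 : (X * Z)ᴴ = X * Z)
    (k k' : A → ℂ)
    (hk : Z *ᵥ k = fun _ => 1) (hk' : k' ᵥ* Z = fun _ => 1) :
    ∑ a, k a = ∑ a, ∑ b, X a b := by
  calc ∑ a, k a = (fun _ => (1:ℂ)) ⬝ᵥ k := by simp [dotProduct]
    _ = (k' ᵥ* Z) ⬝ᵥ k := by rw [hk']
    _ = k' ⬝ᵥ (Z *ᵥ k) := (dotProduct_mulVec k' Z k).symm
    _ = k' ⬝ᵥ ((Z * X * Z) *ᵥ k) := by rw [h1]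
    _ = k' ⬝ᵥ (Z *ᵥ ((X * Z) *ᵥ k)) := by rw [Matrix.mul_assoc, ← mulVec_mulVec]
    _ = (k' ᵥ* Z) ⬝ᵥ ((X * Z) *ᵥ k) := dotProduct_mulVec k' Z _
    _ = (fun _ => (1:ℂ)) ⬝ᵥ (X *ᵥ (Z *ᵥ k)) := by rw [hk', ← mulVec_mulVec]
    _ = (fun _ => (1:ℂ)) ⬝ᵥ (X *ᵥ (fun _ => (1:ℂ))) := by rw [hk]
    _ = ∑ a, ∑ b, X a b := by simp [dotProduct, mulVec]
end

section
/- Let M be an m×m matrix and N an n×n matrix over ℂ, both having magnitude. Then the Kronecker product M ⊗ N has magnitude and χ(M ⊗ N) = χ(M)·χ(N). Concretely, if w, z are a weighting and coweighting of M and w', z' are a weighting and coweighting of N, then the vector ((i,j) ↦ wᵢ·w'ⱼ) is a weighting of M ⊗ N, the vector ((i,j) ↦ zᵢ·z'ⱼ) is a coweighting of M ⊗ N, and the magnitude of M ⊗ N equals (∑ᵢ wᵢ)·(∑ⱼ w'ⱼ). -/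
open Matrix BigOperators Kronecker

/-- If `M` and `N` are square complex matrices with magnitude (weighting `w`,
coweighting `z` for `M`; weighting `w'`, coweighting `z'` for `N`), then the
Kronecker product `M ⊗ₖ N` has magnitude and
`χ(M ⊗ₖ N) = χ(M) · χ(N)`: the vector `(i,j) ↦ wᵢ · w'ⱼ` is a weighting of
`M ⊗ₖ N`, the vector `(i,j) ↦ zᵢ · z'ⱼ` is a coweighting of `M ⊗ₖ N`, and the
sum of the entries of this weighting is `(∑ᵢ wᵢ) · (∑ⱼ w'ⱼ)`. -/
theorem magnitude_kronecker {m n : ℕ}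
    (M : Matrix (Fin m) (Fin m) ℂ) (N : Matrix (Fin n) (Fin n) ℂ)
    (w z : Fin m → ℂ) (w' z' : Fin n → ℂ)
    (hw : M *ᵥ w = fun _ => 1) (hz : z ᵥ* M = fun _ => 1)
    (hw' : N *ᵥ w' = fun _ => 1) (hz' : z' ᵥ* N = fun _ => 1) :
    ((M ⊗ₖ N) *ᵥ (fun p : Fin m × Fin n => w p.1 * w' p.2) = fun _ => 1) ∧
    ((fun p : Fin m × Fin n => z p.1 * z' p.2) ᵥ* (M ⊗ₖ N) = fun _ => 1) ∧
    (∑ p : Fin m × Fin n, w p.1 * w' p.2 = (∑ i, w i) * (∑ j, w' j)) := by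
  refine ⟨?_, ?_, ?_⟩
  · funext p
    have h1 := congrFun hw p.1
    have h2 := congrFun hw' p.2
    simp only [mulVec, dotProduct, kroneckerMap_apply, Fintype.sum_prod_type]
    calc ∑ i, ∑ j, M p.1 i * N p.2 j * (w i * w' j)
        = (∑ i, M p.1 i * w i) * (∑ j, N p.2 j * w' j) := by
          rw [Finset.sum_mul_sum]; apply Finset.sum_congr rfl; intros; apply Finset.sum_congr rfl; intros; ring
      _ = 1 := by
          simp only [mulVec, dotProduct] at h1 h2; rw [h1, h2, one_mul]
  · funext p
    have h1 := congrFun hz p.1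
    have h2 := congrFun hz' p.2
    simp only [vecMul, dotProduct, kroneckerMap_apply, Fintype.sum_prod_type]
    calc ∑ i, ∑ j, z i * z' j * (M i p.1 * N j p.2)
        = (∑ i, z i * M i p.1) * (∑ j, z' j * N j p.2) := by
          rw [Finset.sum_mul_sum]; apply Finset.sum_congr rfl; intros; apply Finset.sum_congr rfl; intros; ring
      _ = 1 := by
          simp only [vecMul, dotProduct] at h1 h2; rw [h1, h2, one_mul]
  · rw [Fintype.sum_prod_type, Finset.sum_mul_sum]
end
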